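/- Let n be a positive integer and let G be a nontrivial group of infinite cardinality κ such that: (i) G is n-Shelah; and (ii) every subset S ⊆ G with |S| < κ is contained in a subgroup H ≤ G with |H| < κ for which there exists g ∈ G with gHg⁻¹ ∩ H = {1}. Then every T₁ topology on G making G a topological group is the discrete topology. -/

import Mathlib

open Cardinal Set Pointwise

/-- A group `G` of infinite cardinality is `n`-Shelah if for every subset `X ⊆ G` of full
cardinality, every element of `G` is a product of exactly `n` elements of `X`. -/
def IsNShelah (G : Type*) [Group G] (n : ℕ) : Prop :=
  ∀ X : Set G, #X = #G → ∀ g : G, ∃ f : Fin n → G, (∀ i, f i ∈ X) ∧ (List.ofFn f).prod = g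

/-- In a topological group, for every neighborhood `U` of `1` there is an open neighborhood
`V` of `1` whose `n`-fold products lie in `U`. -/
lemma exists_open_nhds_one_listProd_subset {G : Type*} [Group G] [TopologicalSpace G]
    [IsTopologicalGroup G] (n : ℕ) {U : Set G} (hU : U ∈ nhds 1) :
    ∃ V : Set G, IsOpen V ∧ (1 : G) ∈ V ∧
      ∀ f : Fin n → G, (∀ i, f i ∈ V) → (List.ofFn f).prod ∈ U := by
  induction n generalizing U with
  | zero =>
    exact ⟨Set.univ, isOpen_univ, trivial, fun f _ => by
      simpa using mem_of_mem_nhds hU⟩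
  | succ n ih =>
    obtain ⟨W, hWo, hW1, hWW⟩ := exists_open_nhds_one_mul_subset hU
    obtain ⟨V, hVo, hV1, hV⟩ := ih (hWo.mem_nhds hW1)
    refine ⟨V ∩ W, hVo.inter hWo, ⟨hV1, hW1⟩, fun f hf => ?_⟩
    rw [List.ofFn_succ, List.prod_cons]
    exact hWW (Set.mul_mem_mul (hf 0).2 (hV (fun i => f i.succ) fun i => (hf i.succ).1))

theorem t1_group_topology_discrete_aux (n : ℕ) (G : Type*) [Group G] [Nontrivial G]
    (hShelah : IsNShelah G n)
    (hcover : ∀ S : Set G, #S < #G → ∃ H : Subgroup G, S ⊆ (H : Set G) ∧ #(H : Set G) < #G ∧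
      ∃ g : G, (fun x => g * x * g⁻¹) '' (H : Set G) ∩ (H : Set G) = {1})
    [TopologicalSpace G] [T1Space G] [IsTopologicalGroup G] : DiscreteTopology G := by
  obtain ⟨a, ha⟩ := exists_ne (1 : G)
  have hUo : IsOpen ({a}ᶜ : Set G) := isOpen_compl_singleton
  have h1U : (1 : G) ∈ ({a}ᶜ : Set G) := by simp [Ne.symm ha]
  obtain ⟨V, hVo, hV1, hV⟩ := exists_open_nhds_one_listProd_subset n (hUo.mem_nhds h1U)
  have hVsmall : #V < #G := by
    rcases lt_or_eq_of_le (mk_set_le V) with h | h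
    · exact h
    · obtain ⟨f, hf, hfp⟩ := hShelah V h a
      exact absurd (hfp ▸ hV f hf) (by simp)
  obtain ⟨H, hVH, -, g, hg⟩ := hcover V hVsmall
  have hconj : IsOpenMap (fun x : G => g * x * g⁻¹) :=
    (isOpenMap_mul_right g⁻¹).comp (isOpenMap_mul_left g)
  have hWo : IsOpen ((fun x : G => g * x * g⁻¹) '' V ∩ V) := (hconj V hVo).inter hVo
  have hW1 : (1 : G) ∈ (fun x : G => g * x * g⁻¹) '' V ∩ V :=
    ⟨⟨1, hV1, by simp⟩, hV1⟩
  have hWsub : (fun x : G => g * x * g⁻¹) '' V ∩ V ⊆ {1} := by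
    rw [← hg]
    exact Set.inter_subset_inter (Set.image_mono hVH) hVH
  have hone : IsOpen ({1} : Set G) := by
    have : (fun x : G => g * x * g⁻¹) '' V ∩ V = {1} :=
      Set.Subset.antisymm hWsub (by simpa using hW1)
    rwa [this] at hWo
  refine discreteTopology_iff_isOpen_singleton.mpr fun b => ?_
  have : ({b} : Set G) = (fun x => b * x) '' {1} := by simp
  rw [this]
  exact (isOpenMap_mul_left b) _ hone

/-- Let `n` be a positive integer and `G` a nontrivial group of infinite cardinality that is
`n`-Shelah and in which every subset of size less than `|G|` is contained in a subgroup `H` of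
size less than `|G|` admitting an element `g` with `gHg⁻¹ ∩ H = {1}`. Then every `T₁` group
topology on `G` is discrete. -/
theorem t1_group_topology_discrete (n : ℕ) (hn : 0 < n) (G : Type*) [Group G] [Nontrivial G]
    (hinf : ℵ₀ ≤ #G) (hShelah : IsNShelah G n)
    (hcover : ∀ S : Set G, #S < #G → ∃ H : Subgroup G, S ⊆ (H : Set G) ∧ #(H : Set G) < #G ∧
      ∃ g : G, (fun x => g * x * g⁻¹) '' (H : Set G) ∩ (H : Set G) = {1}) :
    ∀ t : TopologicalSpace G, @T1Space G t → @IsTopologicalGroup G t _ → t = ⊥ := by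
  intro t ht htg
  letI := t
  haveI := ht
  haveI := htg
  haveI : DiscreteTopology G := t1_group_topology_discrete_aux n G hShelah hcover
  exact DiscreteTopology.eq_bot
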